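/- For k' ≥ 1, the rotational (regular) tournament T on vertices v_0,…,v_{2k'} with arcs v_i → v_{i+j} (indices mod 2k'+1) for j ∈ {1,…,k'} has strong connectivity exactly k', and every vertex cut set of T of cardinality k' consists of k' vertices whose indices form a consecutive sequence modulo 2k'+1. -/

import Mathlib

variable {V : Type*}

/-- Reachability inside a vertex subset `S` of the digraph with arc relation `A`. -/
def ReachIn (A : V → V → Prop) (S : Set V) : V → V → Prop :=
  Relation.ReflTransGen (fun u v => u ∈ S ∧ v ∈ S ∧ A u v)

/-- The sub-digraph induced on `S` is strongly connected. -/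
def StrongIn (A : V → V → Prop) (S : Set V) : Prop :=
  ∀ u ∈ S, ∀ v ∈ S, ReachIn A S u v

/-- `M` is a strongly connected component of the sub-digraph induced on `S`. -/
def IsSCCIn (A : V → V → Prop) (S M : Set V) : Prop :=
  ∃ v ∈ S, M = {u | u ∈ S ∧ ReachIn A S u v ∧ ReachIn A S v u}

/-- There is an arc from (some vertex of) `M` to (some vertex of) `N`. -/
def HasArc (A : V → V → Prop) (M N : Set V) : Prop :=
  ∃ u ∈ M, ∃ w ∈ N, A u w

/-- `S` is a safe set of the sub-digraph of `A` induced on `H`. -/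
def SafeSetIn (A : V → V → Prop) (H S : Set V) : Prop :=
  S.Nonempty ∧ S ⊆ H ∧
    (∀ M, IsSCCIn A (H \ S) M → ∃ N, IsSCCIn A S N ∧ HasArc A M N) ∧
    (∀ M N, IsSCCIn A (H \ S) M → IsSCCIn A S N → HasArc A M N → M.ncard ≤ N.ncard)

/-- `S` is a safe set of the digraph with arc relation `A`. -/
def SafeSet (A : V → V → Prop) (S : Set V) : Prop :=
  SafeSetIn A Set.univ S

/-- `S` is a strong safe set: a safe set inducing a strongly connected sub-digraph. -/
def StrongSafeSet (A : V → V → Prop) (S : Set V) : Prop :=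
  SafeSet A S ∧ StrongIn A S

/-- A digraph is `k`-strong if it has at least `k+1` vertices and deleting any
fewer than `k` vertices leaves a strongly connected digraph. -/
def KStrong [Fintype V] (A : V → V → Prop) (k : ℕ) : Prop :=
  k + 1 ≤ Fintype.card V ∧ ∀ X : Set V, X.ncard < k → StrongIn A Xᶜ

/-- An oriented graph: no loops and no 2-cycles. -/
def Oriented (A : V → V → Prop) : Prop :=
  ∀ u v, A u v → ¬ A v u

/-- A tournament: no loops, and exactly one arc between any two distinct vertices. -/
def IsTournament (A : V → V → Prop) : Prop :=
  (∀ v, ¬ A v v) ∧ ∀ u v : V, u ≠ v → (A u v ↔ ¬ A v u)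

/-- An acyclic digraph: no arc lies on a directed cycle. -/
def AcyclicDigraph (A : V → V → Prop) : Prop :=
  ∀ u v, A u v → ¬ ReachIn A Set.univ v u

/-- `S` is in-dominating: every vertex outside `S` has an out-neighbour in `S`. -/
def InDominating (A : V → V → Prop) (S : Set V) : Prop :=
  ∀ v, v ∉ S → ∃ w ∈ S, A v w

/-- An independent set of a digraph: no arc between any two of its vertices. -/
def IndepSet (A : V → V → Prop) (I : Set V) : Prop :=
  ∀ u ∈ I, ∀ v ∈ I, u ≠ v → ¬ A u v

noncomputable def outDeg (A : V → V → Prop) (v : V) : ℕ := {w | A v w}.ncard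
noncomputable def inDeg (A : V → V → Prop) (v : V) : ℕ := {w | A w v}.ncard

/-- The safe number: minimum cardinality of a safe set. -/
noncomputable def safeNum (A : V → V → Prop) : ℕ :=
  sInf {n | ∃ S : Set V, SafeSet A S ∧ S.ncard = n}

/-- The strong safe number: minimum cardinality of a strong safe set. -/
noncomputable def strongSafeNum (A : V → V → Prop) : ℕ :=
  sInf {n | ∃ S : Set V, StrongSafeSet A S ∧ S.ncard = n}

/-- The sub-digraph induced on `S` is acyclic. -/
def AcyclicIn (A : V → V → Prop) (S : Set V) : Prop :=
  ∀ u ∈ S, ∀ v ∈ S, A u v → ¬ ReachIn A S v u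


namespace Stmt13Aux

theorem reach (k : ℕ) (X : Set (Fin (2 * k + 1)))
    (hX : ∀ w : Fin (2 * k + 1), w ∈ Xᶜ → ∃ w' : Fin (2 * k + 1), w' ∈ Xᶜ ∧
      ∃ t : ℕ, 1 ≤ t ∧ t ≤ k ∧ w'.val = (w.val + t) % (2 * k + 1)) :
    StrongIn (fun i j : Fin (2 * k + 1) =>
      ∃ t : ℕ, 1 ≤ t ∧ t ≤ k ∧ j.val = (i.val + t) % (2 * k + 1)) Xᶜ := by
  have H : ∀ d : ℕ, ∀ u : Fin (2 * k + 1), u ∈ Xᶜ → ∀ v : Fin (2 * k + 1), v ∈ Xᶜ →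
      v.val = (u.val + d) % (2 * k + 1) →
      ReachIn (fun i j : Fin (2 * k + 1) =>
        ∃ t : ℕ, 1 ≤ t ∧ t ≤ k ∧ j.val = (i.val + t) % (2 * k + 1)) Xᶜ u v := by
    intro d
    induction d using Nat.strong_induction_on with
    | _ d ih =>
      intro u hu v hv hval
      rcases Nat.eq_zero_or_pos d with hd0 | hd0
      · subst hd0
        have : v = u := Fin.ext (by simpa [Nat.mod_eq_of_lt u.isLt] using hval)
        subst this; exact Relation.ReflTransGen.refl
      rcases le_or_gt d k with hdk | hdk
      · exact Relation.ReflTransGen.single ⟨hu, hv, d, hd0, hdk, hval⟩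
      · obtain ⟨w, hw, t, ht1, htk, hwval⟩ := hX u hu
        have hv' : v.val = (w.val + (d - t)) % (2 * k + 1) := by
          rw [hwval, Nat.mod_add_mod]
          have h2 : w.val + t + (d - t) = w.val + d := by omega
          have h3 : u.val + t + (d - t) = u.val + d := by omega
          rw [h3]; exact hval
        exact Relation.ReflTransGen.head ⟨hu, hw, t, ht1, htk, hwval⟩
          (ih (d - t) (by omega) w hw v hv hv')
  intro u hu v hv
  by_cases h : u.val ≤ v.val
  · apply H (v.val - u.val) u hu v hv
    have : u.val + (v.val - u.val) = v.val := by omega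
    rw [this, Nat.mod_eq_of_lt v.isLt]
  · apply H (v.val + (2 * k + 1) - u.val) u hu v hv
    have : u.val + (v.val + (2 * k + 1) - u.val) = v.val + (2 * k + 1) := by
      have := u.isLt; omega
    rw [this, Nat.add_mod_right, Nat.mod_eq_of_lt v.isLt]

/-- The out-neighbourhood of `w`. -/
def nbr (k : ℕ) (w : Fin (2 * k + 1)) : Set (Fin (2 * k + 1)) :=
  {v | ∃ t : ℕ, 1 ≤ t ∧ t ≤ k ∧ v.val = (w.val + t) % (2 * k + 1)}

theorem nbr_eq_image (k : ℕ) (w : Fin (2 * k + 1)) :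
    nbr k w = (fun t : ℕ => (⟨(w.val + t) % (2 * k + 1),
      Nat.mod_lt _ (by omega)⟩ : Fin (2 * k + 1))) '' Set.Icc 1 k := by
  ext v
  constructor
  · rintro ⟨t, ht1, htk, hv⟩
    exact ⟨t, ⟨ht1, htk⟩, Fin.ext hv.symm⟩
  · rintro ⟨t, ⟨ht1, htk⟩, rfl⟩
    exact ⟨t, ht1, htk, rfl⟩

theorem nbr_ncard (k : ℕ) (w : Fin (2 * k + 1)) : (nbr k w).ncard = k := by
  rw [nbr_eq_image]
  rw [Set.ncard_image_of_injOn]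
  · simp [Set.ncard_eq_toFinset_card', Set.toFinset_Icc]
  · intro t ht t' ht' hft
    simp only [Set.mem_Icc] at ht ht'
    have h1 : (w.val + t) % (2 * k + 1) = (w.val + t') % (2 * k + 1) :=
      congrArg Fin.val hft
    have h2 : t ≡ t' [MOD 2 * k + 1] := Nat.ModEq.add_left_cancel' w.val h1
    have h3 : t % (2 * k + 1) = t' % (2 * k + 1) := h2
    rw [Nat.mod_eq_of_lt (by omega), Nat.mod_eq_of_lt (by omega)] at h3
    exact h3

end Stmt13Aux


open Stmt13Aux

theorem stmt13 (k : ℕ) (hk : 1 ≤ k) :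
    let A : Fin (2 * k + 1) → Fin (2 * k + 1) → Prop := fun i j =>
      ∃ t : ℕ, 1 ≤ t ∧ t ≤ k ∧ j.val = (i.val + t) % (2 * k + 1)
    KStrong A k ∧ ¬ KStrong A (k + 1) ∧
      ∀ X : Set (Fin (2 * k + 1)), X.ncard = k → ¬ StrongIn A Xᶜ →
        ∃ a : ℕ, X = {v | ∃ t : ℕ, t < k ∧ v.val = (a + t) % (2 * k + 1)} := by
  intro A
  have hsubX : ∀ (X : Set (Fin (2 * k + 1))) (w : Fin (2 * k + 1)),
      (∀ w' : Fin (2 * k + 1), w' ∈ Xᶜ → ∀ t : ℕ, 1 ≤ t → t ≤ k →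
        w'.val ≠ (w.val + t) % (2 * k + 1)) → nbr k w ⊆ X := by
    intro X w hcon v hv
    obtain ⟨t, ht1, htk, hval⟩ := hv
    by_contra hvX
    exact hcon v hvX t ht1 htk hval
  refine ⟨⟨?_, ?_⟩, ?_, ?_⟩
  · simp only [Fintype.card_fin]; omega
  · intro X hXcard
    apply reach k X
    intro w hw
    by_contra hcon
    push_neg at hcon
    have hsub := hsubX X w hcon
    have := Set.ncard_le_ncard hsub X.toFinite
    rw [nbr_ncard k w] at this
    omega
  · rintro ⟨hcard, hstr⟩
    set z : Fin (2 * k + 1) := ⟨0, by omega⟩ with hz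
    set v₀ : Fin (2 * k + 1) := ⟨k + 1, by omega⟩ with hv₀
    have hXcard : (nbr k z).ncard < k + 1 := by rw [nbr_ncard]; omega
    have hzmem : z ∈ (nbr k z)ᶜ := by
      rintro ⟨t, ht1, htk, hval⟩
      rw [hz] at hval
      simp only [Nat.zero_add, Nat.mod_eq_of_lt (show t < 2 * k + 1 by omega)] at hval
      omega
    have hvmem : v₀ ∈ (nbr k z)ᶜ := by
      rintro ⟨t, ht1, htk, hval⟩
      rw [hz] at hval
      simp only [Nat.zero_add, Nat.mod_eq_of_lt (show t < 2 * k + 1 by omega)] at hval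
      simp only [hv₀, Fin.val_mk, Nat.zero_add, Nat.mod_eq_of_lt (show t < 2 * k + 1 by omega)] at hval
      omega
    have hreach := hstr (nbr k z) hXcard z hzmem v₀ hvmem
    rcases hreach.cases_head with heq | ⟨c, ⟨_, hc, t, ht1, htk, hcval⟩, _⟩
    · rw [hz, hv₀] at heq
      simp only [Fin.mk.injEq] at heq
      omega
    · exact hc ⟨t, ht1, htk, hcval⟩
  · intro X hXcard hns
    have hcon : ¬ (∀ w : Fin (2 * k + 1), w ∈ Xᶜ → ∃ w' : Fin (2 * k + 1), w' ∈ Xᶜ ∧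
        ∃ t : ℕ, 1 ≤ t ∧ t ≤ k ∧ w'.val = (w.val + t) % (2 * k + 1)) :=
      fun h => hns (reach k X h)
    push_neg at hcon
    obtain ⟨w, hw, hcon⟩ := hcon
    have hsub := hsubX X w hcon
    have hXeq : nbr k w = X :=
      Set.eq_of_subset_of_ncard_le hsub (by rw [hXcard, nbr_ncard]) X.toFinite
    refine ⟨w.val + 1, ?_⟩
    rw [← hXeq]
    ext v
    constructor
    · rintro ⟨t, ht1, htk, hval⟩
      refine ⟨t - 1, by omega, ?_⟩
      have : w.val + 1 + (t - 1) = w.val + t := by omega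
      rw [this]; exact hval
    · rintro ⟨t, htk, hval⟩
      refine ⟨t + 1, by omega, by omega, ?_⟩
      have : w.val + (t + 1) = w.val + 1 + t := by omega
      rw [this]; exact hval
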